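/- Let c, d ≥ 2 be integers, set g = gcd(c-1, d-1), and let k = 1 - (c+d-2)/g (an integer since g divides c+d-2, and k ≤ 0). Then: X̃_k = Ỹ_k = {(c-1)/g}, W̃_k = {(c-1)/g - 1}, and Z̃_{j,k} = ∅ for every integer j with 1 ≤ j ≤ d-1. -/

import Mathlib

/-- For the loop-type polynomial with `g = gcd(c-1,d-1)` and
`k = 1 - (c+d-2)/g`, the sets `X̃_k` and `Ỹ_k` both equal `{(c-1)/g}`,
`W̃_k = {(c-1)/g - 1}`, and all the `Z̃_{j,k}` are empty. -/
theorem loop_first_concentrated_degree (c d g k : ℤ) (hc : 2 ≤ c) (hd : 2 ≤ d)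
    (hg : g = (Int.gcd (c - 1) (d - 1) : ℤ)) (hk : k = 1 - (c + d - 2) / g) :
    {m : ℤ | 0 ≤ m ∧ 0 ≤ (c + d - 2) * m + (c - 1) * k ∧
        (c + d - 2) * m + (c - 1) * k ≤ c - 1} = {(c - 1) / g} ∧
    {m : ℤ | 0 ≤ m ∧ (c + d - 2) * m = (c - 1) * (1 - k)} = {(c - 1) / g} ∧
    {m : ℤ | m ≤ -k ∧ 1 ≤ -(c + d - 2) * m - (c - 1) * k ∧
        -(c + d - 2) * m - (c - 1) * k ≤ 2 * (d - 1)} = {(c - 1) / g - 1} ∧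
    ∀ j : ℤ, 1 ≤ j → j ≤ d - 1 →
      {m : ℤ | 1 ≤ (c + d - 2) * m + j + (c - 1) * k ∧
          (c + d - 2) * m + j + (c - 1) * k ≤ c - 2} = (∅ : Set ℤ) := by
  have hg0 : 0 < g := by
    rw [hg]
    exact_mod_cast Int.gcd_pos_iff.mpr (Or.inl (by omega))
  obtain ⟨a, ha⟩ : g ∣ (c - 1) := by rw [hg]; exact Int.gcd_dvd_left _ _
  obtain ⟨b, hb⟩ : g ∣ (d - 1) := by rw [hg]; exact Int.gcd_dvd_right _ _
  have ha1 : 1 ≤ a := by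
    by_contra h
    have := mul_le_mul_of_nonneg_left (show a ≤ 0 by omega) hg0.le
    simp at this
    omega
  have hb1 : 1 ≤ b := by
    by_contra h
    have := mul_le_mul_of_nonneg_left (show b ≤ 0 by omega) hg0.le
    simp at this
    omega
  have hcd : c + d - 2 = g * (a + b) := by linear_combination ha + hb
  have hca : (c - 1) / g = a := by
    rw [ha, Int.mul_ediv_cancel_left _ hg0.ne']
  have hk' : k = 1 - (a + b) := by
    rw [hk, hcd, Int.mul_ediv_cancel_left _ hg0.ne']
  subst hk'
  refine ⟨?_, ?_, ?_, ?_⟩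
  · -- X̃
    ext m
    simp only [Set.mem_setOf_eq, Set.mem_singleton_iff, hca]
    constructor
    · rintro ⟨hm, h1, h2⟩
      have e1 : (c + d - 2) * m + (c - 1) * (1 - (a + b))
          = g * ((a + b) * (m - a) + a) := by
        rw [hcd, ha]; ring
      rw [e1] at h1 h2
      have h1' : 0 ≤ (a + b) * (m - a) + a := by
        by_contra h
        have := mul_le_mul_of_nonneg_left (show (a + b) * (m - a) + a ≤ -1 by omega) hg0.le
        nlinarith
      have h2' : (a + b) * (m - a) + a ≤ a := by
        rw [ha] at h2
        exact le_of_mul_le_mul_left h2 hg0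
      have hle : m ≤ a := by
        by_contra h
        have := mul_le_mul_of_nonneg_left (show (1:ℤ) ≤ m - a by omega)
          (show (0:ℤ) ≤ a + b by omega)
        nlinarith
      have hge : a ≤ m := by
        by_contra h
        have := mul_le_mul_of_nonneg_left (show m - a ≤ -1 by omega)
          (show (0:ℤ) ≤ a + b by omega)
        nlinarith
      omega
    · intro h
      rw [h]
      refine ⟨by omega, ?_, ?_⟩
      · have e1 : (c + d - 2) * a + (c - 1) * (1 - (a + b)) = g * a := by
          rw [hcd, ha]; ring
        rw [e1]; positivity
      · have e1 : (c + d - 2) * a + (c - 1) * (1 - (a + b)) = c - 1 := by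
          rw [hcd, ha]; ring
        rw [e1]
  · -- Ỹ
    ext m
    simp only [Set.mem_setOf_eq, Set.mem_singleton_iff, hca]
    constructor
    · rintro ⟨hm, h1⟩
      have e1 : (c - 1) * (1 - (1 - (a + b))) = (g * (a + b)) * a := by
        rw [ha]; ring
      rw [e1, hcd] at h1
      have hab0 : g * (a + b) ≠ 0 := by positivity
      exact mul_left_cancel₀ hab0 h1
    · intro h
      rw [h]
      refine ⟨by omega, ?_⟩
      rw [hcd, ha]; ring
  · -- W̃
    ext m
    simp only [Set.mem_setOf_eq, Set.mem_singleton_iff, hca]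
    constructor
    · rintro ⟨hm, h1, h2⟩
      have e1 : -(c + d - 2) * m - (c - 1) * (1 - (a + b))
          = g * ((a + b) * (a - m) - a) := by
        rw [hcd, ha]; ring
      rw [e1] at h1 h2
      have h1' : 1 ≤ (a + b) * (a - m) - a := by
        by_contra h
        have := mul_le_mul_of_nonneg_left (show (a + b) * (a - m) - a ≤ 0 by omega) hg0.le
        nlinarith
      have h2' : (a + b) * (a - m) - a ≤ 2 * b := by
        rw [hb] at h2
        have h2'' : g * ((a + b) * (a - m) - a) ≤ g * (2 * b) := by linarith
        exact le_of_mul_le_mul_left h2'' hg0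
      have hge : a - m ≤ 1 := by
        by_contra h
        have := mul_le_mul_of_nonneg_left (show (2:ℤ) ≤ a - m by omega)
          (show (0:ℤ) ≤ a + b by omega)
        nlinarith
      have hle : 1 ≤ a - m := by
        by_contra h
        have := mul_le_mul_of_nonneg_left (show a - m ≤ 0 by omega)
          (show (0:ℤ) ≤ a + b by omega)
        nlinarith
      omega
    · intro h
      rw [h]
      refine ⟨by omega, ?_, ?_⟩
      · have e1 : -(c + d - 2) * (a - 1) - (c - 1) * (1 - (a + b)) = g * b := by
          rw [hcd, ha]; ring
        rw [e1]
        nlinarith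
      · have e1 : -(c + d - 2) * (a - 1) - (c - 1) * (1 - (a + b)) = g * b := by
          rw [hcd, ha]; ring
        rw [e1, hb]
        nlinarith
  · -- Z̃
    intro j hj1 hj2
    ext m
    simp only [Set.mem_setOf_eq, Set.mem_empty_iff_false, iff_false, not_and]
    intro h1 h2
    exfalso
    have e1 : (c + d - 2) * m + j + (c - 1) * (1 - (a + b))
        = g * ((a + b) * (m - a) + a) + j := by
      rw [hcd, ha]; ring
    rw [e1] at h1 h2
    have hjb : j ≤ g * b := by omega
    -- g * ((a+b)*(m-a)) ≤ -1 - j ≤ -2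
    have hu1 : (a + b) * (m - a) ≤ -1 := by
      by_contra h
      have := mul_le_mul_of_nonneg_left (show (0:ℤ) ≤ (a + b) * (m - a) by omega) hg0.le
      nlinarith
    have hu2 : -(a + b) < (a + b) * (m - a) := by
      by_contra h
      have := mul_le_mul_of_nonneg_left (show (a + b) * (m - a) ≤ -(a + b) by omega) hg0.le
      nlinarith
    rcases le_or_gt (m - a) (-1) with h | h
    · have := mul_le_mul_of_nonneg_left (show m - a ≤ -1 by omega)
        (show (0:ℤ) ≤ a + b by omega)
      nlinarith
    · have := mul_le_mul_of_nonneg_left (show (0:ℤ) ≤ m - a by omega)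
        (show (0:ℤ) ≤ a + b by omega)
      nlinarith
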